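/- Let k ≥ 1. If n = 2^{2k} - 1 - ∑_{r=0}^{k-2} ε_r·(3·2^{2r+1}) - β for some choice of ε_r ∈ {0,1} (for 0 ≤ r ≤ k-2) and β ∈ {0,2}, then S(n) = 2^k. -/

import Mathlib

/-- `inv2 n` is the number of inversions in the binary representation of `n`,
i.e. the number of pairs of bit positions `a > b` such that bit `a` of `n` is `1`
and bit `b` of `n` is `0`. -/
def inv2 (n : ℕ) : ℕ :=
  ((Finset.range (n + 1) ×ˢ Finset.range (n + 1)).filter
    (fun p => p.2 < p.1 ∧ n.testBit p.1 = true ∧ n.testBit p.2 = false)).card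

/-- `iSeq n = (-1)^(inv2 n)`. -/
def iSeq (n : ℕ) : ℤ := (-1) ^ inv2 n


/-- The summatory function `S N = ∑_{0 ≤ n ≤ N} iSeq n`. -/
def S (N : ℕ) : ℤ := ∑ n ∈ Finset.range (N + 1), iSeq n


/-- An integer `n` is of the special form for `k ≥ 1` if
`n = 2^(2k) - 1 - ∑_{r=0}^{k-2} ε_r (3 ⬝ 2^(2r+1)) - β` for some choice of
`ε_r ∈ {0,1}` and `β ∈ {0,2}`. -/
def IsSpecialForm (k : ℕ) (n : ℤ) : Prop :=
  ∃ ε : ℕ → ℤ, (∀ r, ε r = 0 ∨ ε r = 1) ∧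
    ∃ β : ℤ, (β = 0 ∨ β = 2) ∧
      n = 2 ^ (2 * k) - 1 - (∑ r ∈ Finset.range (k - 1), ε r * (3 * 2 ^ (2 * r + 1))) - β



def pc (n : ℕ) : ℕ := ((Finset.range (n+1)).filter (fun a => n.testBit a = true)).card

lemma testBit_lt' {n a : ℕ} (h : n.testBit a = true) : a < n + 1 := by
  have h1 := Nat.ge_two_pow_of_testBit h
  have h2 := (Nat.lt_two_pow_self (n := a))
  omega

lemma half_odd (n : ℕ) : (2*n+1)/2 = n := by omega

lemma pc_odd (n : ℕ) : pc (2*n+1) = pc n + 1 := by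
  have key : (Finset.range (2*n+1+1)).filter (fun a => (2*n+1).testBit a = true)
      = insert 0 (((Finset.range (n+1)).filter (fun a => n.testBit a = true)).image (· + 1)) := by
    ext a
    simp only [Finset.mem_filter, Finset.mem_range, Finset.mem_insert, Finset.mem_image]
    constructor
    · rintro ⟨ha, hb⟩
      cases a with
      | zero => exact Or.inl rfl
      | succ b =>
        right
        rw [Nat.testBit_succ, half_odd] at hb
        exact ⟨b, ⟨testBit_lt' hb, hb⟩, rfl⟩
    · rintro (rfl | ⟨b, ⟨hb1, hb2⟩, rfl⟩)
      · refine ⟨by omega, ?_⟩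
        rw [Nat.testBit_zero]
        simp
      · refine ⟨by omega, ?_⟩
        rw [Nat.testBit_succ, half_odd]; exact hb2
  show ((Finset.range (2*n+1+1)).filter _).card = _
  rw [key, Finset.card_insert_of_notMem (by simp),
    Finset.card_image_of_injective _ (add_left_injective 1)]
  rfl

lemma pc_even (n : ℕ) : pc (2*n) = pc n := by
  have key : (Finset.range (2*n+1)).filter (fun a => (2*n).testBit a = true)
      = ((Finset.range (n+1)).filter (fun a => n.testBit a = true)).image (· + 1) := by
    ext a
    simp only [Finset.mem_filter, Finset.mem_range, Finset.mem_image]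
    constructor
    · rintro ⟨ha, hb⟩
      cases a with
      | zero =>
        rw [Nat.testBit_zero] at hb
        simp at hb
      | succ b =>
        rw [Nat.testBit_succ] at hb
        have h2 : (2*n)/2 = n := by omega
        rw [h2] at hb
        exact ⟨b, ⟨testBit_lt' hb, hb⟩, rfl⟩
    · rintro ⟨b, ⟨hb1, hb2⟩, rfl⟩
      have := Nat.ge_two_pow_of_testBit hb2
      have := (Nat.lt_two_pow_self (n := b))
      refine ⟨by omega, ?_⟩
      rw [Nat.testBit_succ]
      have h2 : (2*n)/2 = n := by omega
      rw [h2]; exact hb2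
  show ((Finset.range (2*n+1)).filter _).card = _
  rw [key, Finset.card_image_of_injective _ (add_left_injective 1)]
  rfl

lemma half_even (n : ℕ) : (2*n)/2 = n := by omega

lemma shift_inj : Function.Injective (fun p : ℕ × ℕ => (p.1 + 1, p.2 + 1)) := by
  rintro ⟨a, b⟩ ⟨c, d⟩ h
  simp only [Prod.mk.injEq] at h
  simp [Prod.ext_iff]; omega

lemma inv2_odd (n : ℕ) : inv2 (2*n+1) = inv2 n := by
  have key : ((Finset.range (2*n+1+1) ×ˢ Finset.range (2*n+1+1)).filter
      (fun p => p.2 < p.1 ∧ (2*n+1).testBit p.1 = true ∧ (2*n+1).testBit p.2 = false))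
      = ((Finset.range (n+1) ×ˢ Finset.range (n+1)).filter
      (fun p => p.2 < p.1 ∧ n.testBit p.1 = true ∧ n.testBit p.2 = false)).image
        (fun p => (p.1 + 1, p.2 + 1)) := by
    ext ⟨a, b⟩
    simp only [Finset.mem_filter, Finset.mem_product, Finset.mem_range, Finset.mem_image,
      Prod.mk.injEq, Prod.exists]
    constructor
    · rintro ⟨⟨ha, hb⟩, hba, h1, h0⟩
      cases b with
      | zero =>
        rw [Nat.testBit_zero] at h0; simp at h0
      | succ y =>
        cases a with
        | zero => omega
        | succ x =>
          rw [Nat.testBit_succ, half_odd] at h1 h0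
          exact ⟨x, y, ⟨⟨⟨testBit_lt' h1, by have := testBit_lt' h1; omega⟩, by omega, h1, h0⟩, rfl, rfl⟩⟩
    · rintro ⟨x, y, ⟨⟨hx, hy⟩, hyx, h1, h0⟩, rfl, rfl⟩
      have := Nat.ge_two_pow_of_testBit h1
      have := (Nat.lt_two_pow_self (n := x))
      refine ⟨⟨by omega, by omega⟩, by omega, ?_, ?_⟩
      · rw [Nat.testBit_succ, half_odd]; exact h1
      · rw [Nat.testBit_succ, half_odd]; exact h0
  show (Finset.filter _ _).card = _
  rw [key, Finset.card_image_of_injective _ shift_inj]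
  rfl

lemma inv2_even (n : ℕ) : inv2 (2*n) = inv2 n + pc n := by
  have key : ((Finset.range (2*n+1) ×ˢ Finset.range (2*n+1)).filter
      (fun p => p.2 < p.1 ∧ (2*n).testBit p.1 = true ∧ (2*n).testBit p.2 = false))
      = (((Finset.range (n+1) ×ˢ Finset.range (n+1)).filter
      (fun p => p.2 < p.1 ∧ n.testBit p.1 = true ∧ n.testBit p.2 = false)).image
        (fun p => (p.1 + 1, p.2 + 1))) ∪
        (((Finset.range (n+1)).filter (fun a => n.testBit a = true)).image (fun a => (a + 1, 0))) := by
    ext ⟨a, b⟩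
    simp only [Finset.mem_filter, Finset.mem_product, Finset.mem_range, Finset.mem_image,
      Finset.mem_union, Prod.mk.injEq, Prod.exists]
    constructor
    · rintro ⟨⟨ha, hb⟩, hba, h1, h0⟩
      cases a with
      | zero => omega
      | succ x =>
        rw [Nat.testBit_succ, half_even] at h1
        cases b with
        | zero =>
          right
          exact ⟨x, ⟨testBit_lt' h1, h1⟩, rfl, rfl⟩
        | succ y =>
          left
          rw [Nat.testBit_succ, half_even] at h0
          exact ⟨x, y, ⟨⟨⟨testBit_lt' h1, by have := testBit_lt' h1; omega⟩, by omega, h1, h0⟩, rfl, rfl⟩⟩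
    · rintro (⟨x, y, ⟨⟨hx, hy⟩, hyx, h1, h0⟩, rfl, rfl⟩ | ⟨x, ⟨hx, h1⟩, rfl, rfl⟩)
      · have := Nat.ge_two_pow_of_testBit h1
        have := (Nat.lt_two_pow_self (n := x))
        refine ⟨⟨by omega, by omega⟩, by omega, ?_, ?_⟩
        · rw [Nat.testBit_succ, half_even]; exact h1
        · rw [Nat.testBit_succ, half_even]; exact h0
      · have := Nat.ge_two_pow_of_testBit h1
        have := (Nat.lt_two_pow_self (n := x))
        refine ⟨⟨by omega, by omega⟩, by omega, ?_, ?_⟩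
        · rw [Nat.testBit_succ, half_even]; exact h1
        · rw [Nat.testBit_zero]; simp
  have hdisj : Disjoint (((Finset.range (n+1) ×ˢ Finset.range (n+1)).filter
      (fun p => p.2 < p.1 ∧ n.testBit p.1 = true ∧ n.testBit p.2 = false)).image
        (fun p => (p.1 + 1, p.2 + 1)))
        (((Finset.range (n+1)).filter (fun a => n.testBit a = true)).image (fun a => (a + 1, 0))) := by
    rw [Finset.disjoint_left]
    rintro ⟨a, b⟩ hmem1 hmem2
    simp only [Finset.mem_image, Prod.mk.injEq, Prod.exists] at hmem1 hmem2
    obtain ⟨x, y, _, _, h1⟩ := hmem1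
    obtain ⟨x', _, _, h2⟩ := hmem2
    omega
  show (Finset.filter _ _).card = _
  rw [key, Finset.card_union_of_disjoint hdisj,
    Finset.card_image_of_injective _ shift_inj,
    Finset.card_image_of_injective _ (by intro a b h; simpa using h)]
  rfl

def T (N : ℕ) : ℤ := ∑ n ∈ Finset.range (N + 1), iSeq n * (-1) ^ pc n


lemma iSeq_odd (n : ℕ) : iSeq (2*n+1) = iSeq n := by
  simp only [iSeq]; rw [inv2_odd]

lemma iSeq_even (n : ℕ) : iSeq (2*n) = iSeq n * (-1)^(pc n) := by
  simp only [iSeq]; rw [inv2_even, pow_add]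

lemma S_succ (N : ℕ) : S (N+1) = S N + iSeq (N+1) := Finset.sum_range_succ _ _
lemma T_succ (N : ℕ) : T (N+1) = T N + iSeq (N+1) * (-1)^(pc (N+1)) := Finset.sum_range_succ _ _

lemma ST_odd (N : ℕ) : S (2*N+1) = S N + T N ∧ T (2*N+1) = S N - T N := by
  induction N with
  | zero =>
    have h0 : inv2 0 = 0 := by decide
    have h1 : inv2 1 = 0 := by decide
    have p0 : pc 0 = 0 := by decide
    have p1 : pc 1 = 1 := by decide
    constructor
    · show S 1 = S 0 + T 0
      simp [S, T, iSeq, Finset.sum_range_succ, h0, h1, p0, p1]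
    · show T 1 = S 0 - T 0
      simp [T, S, iSeq, Finset.sum_range_succ, h0, h1, p0, p1]
  | succ N ih =>
    obtain ⟨ih1, ih2⟩ := ih
    have e2 : (2*N+1)+1 = 2*(N+1) := by ring
    have e3 : 2*(N+1)+1 = ((2*N+1)+1)+1 := by ring
    have hS : S (2*(N+1)+1) = S (2*N+1) + iSeq (2*(N+1)) + iSeq (2*(N+1)+1) := by
      rw [e3, S_succ, S_succ, ← e3, ← e2]
    have hT : T (2*(N+1)+1) = T (2*N+1) + iSeq (2*(N+1)) * (-1)^(pc (2*(N+1)))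
        + iSeq (2*(N+1)+1) * (-1)^(pc (2*(N+1)+1)) := by
      rw [e3, T_succ, T_succ, ← e3, ← e2]
    rw [iSeq_odd, iSeq_even] at hS
    rw [iSeq_odd, iSeq_even, pc_even, pc_odd, pow_succ] at hT
    have hsq : ((-1:ℤ)^(pc (N+1))) * ((-1:ℤ)^(pc (N+1))) = 1 := by
      rw [← mul_pow]; norm_num
    constructor
    · rw [hS, ih1, S_succ, T_succ]; ring
    · rw [hT, ih2, S_succ, T_succ]; linear_combination iSeq (N+1) * hsq

lemma S_even (N : ℕ) : S (2*N) = S N + T N - iSeq N := by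
  have h := (ST_odd N).1
  have h2 : S (2*N+1) = S (2*N) + iSeq (2*N+1) := S_succ (2*N)
  rw [iSeq_odd] at h2; linarith

lemma T_even (N : ℕ) : T (2*N) = S N - T N + iSeq N * (-1)^(pc N) := by
  have h := (ST_odd N).2
  have h2 : T (2*N+1) = T (2*N) + iSeq (2*N+1) * (-1)^(pc (2*N+1)) := T_succ (2*N)
  rw [iSeq_odd, pc_odd, pow_succ] at h2; linarith

lemma S4p3 (m : ℕ) : S (4*m+3) = 2 * S m := by
  have e : 4*m+3 = 2*(2*m+1)+1 := by ring
  rw [e, (ST_odd (2*m+1)).1, (ST_odd m).1, (ST_odd m).2]; ring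

lemma S4p1 (m : ℕ) : S (4*m+1) = 2*S m - iSeq m + iSeq m * (-1)^(pc m) := by
  have e : 4*m+1 = 2*(2*m)+1 := by ring
  rw [e, (ST_odd (2*m)).1, S_even, T_even]; ring

lemma pc43 (m : ℕ) : pc (4*m+3) = pc m + 2 := by
  have e : 4*m+3 = 2*(2*m+1)+1 := by ring
  rw [e, pc_odd, pc_odd]

lemma pc42 (m : ℕ) : pc (4*m+2) = pc m + 1 := by
  have e : 4*m+2 = 2*(2*m+1) := by ring
  rw [e, pc_even, pc_odd]

lemma pc41 (m : ℕ) : pc (4*m+1) = pc m + 1 := by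
  have e : 4*m+1 = 2*(2*m)+1 := by ring
  rw [e, pc_odd, pc_even]

lemma pc40 (m : ℕ) : pc (4*m) = pc m := by
  have e : 4*m = 2*(2*m) := by ring
  rw [e, pc_even, pc_even]

lemma inv43 (m : ℕ) : inv2 (4*m+3) = inv2 m := by
  have e : 4*m+3 = 2*(2*m+1)+1 := by ring
  rw [e, inv2_odd, inv2_odd]

lemma inv42 (m : ℕ) : inv2 (4*m+2) = inv2 m + pc m + 1 := by
  have e : 4*m+2 = 2*(2*m+1) := by ring
  rw [e, inv2_even, inv2_odd, pc_odd]; omega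

lemma inv41 (m : ℕ) : inv2 (4*m+1) = inv2 m + pc m := by
  have e : 4*m+1 = 2*(2*m)+1 := by ring
  rw [e, inv2_odd, inv2_even]

lemma inv40 (m : ℕ) : inv2 (4*m) = inv2 m + 2 * pc m := by
  have e : 4*m = 2*(2*m) := by ring
  rw [e, inv2_even, inv2_even, pc_even]; ring

lemma negonepow_even (a : ℕ) (h : a % 2 = 0) : (-1:ℤ)^a = 1 :=
  Even.neg_one_pow (Nat.even_iff.mpr h)
lemma negonepow_odd (a : ℕ) (h : a % 2 = 1) : (-1:ℤ)^a = -1 :=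
  Odd.neg_one_pow (Nat.odd_iff.mpr h)

lemma key_lemma (k : ℕ) (hk : 1 ≤ k) : ∀ ε : ℕ → ℤ, (∀ r, ε r = 0 ∨ ε r = 1) →
    (∀ n : ℕ, (n:ℤ) = 2^(2*k) - 1 - (∑ r ∈ Finset.range (k-1), ε r * (3*2^(2*r+1))) →
      S n = 2^k ∧ pc n % 2 = 0 ∧ iSeq (n-1) = - iSeq n ∧ pc (n-1) % 2 = 1) ∧
    (∀ n : ℕ, (n:ℤ) = 2^(2*k) - 1 - (∑ r ∈ Finset.range (k-1), ε r * (3*2^(2*r+1))) - 2 →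
      S n = 2^k) := by
  induction k, hk using Nat.le_induction with
  | base =>
    intro ε hε
    constructor
    · intro n hn
      norm_num [show (1:ℕ)-1 = 0 from rfl] at hn
      have hn3 : n = 3 := by exact_mod_cast hn
      subst hn3
      refine ⟨?_, by decide, ?_, by decide⟩
      · show S 3 = 2
        have e0 : inv2 0 = 0 := by decide
        have e1 : inv2 1 = 0 := by decide
        have e2 : inv2 2 = 1 := by decide
        have e3 : inv2 3 = 0 := by decide
        simp [S, iSeq, Finset.sum_range_succ, e0, e1, e2, e3]
      · show iSeq 2 = - iSeq 3
        have e2 : inv2 2 = 1 := by decide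
        have e3 : inv2 3 = 0 := by decide
        simp [iSeq, e2, e3]
    · intro n hn
      norm_num [show (1:ℕ)-1 = 0 from rfl] at hn
      have hn1 : n = 1 := by exact_mod_cast hn
      subst hn1
      show S 1 = 2
      have e0 : inv2 0 = 0 := by decide
      have e1 : inv2 1 = 0 := by decide
      simp [S, iSeq, Finset.sum_range_succ, e0, e1]
  | succ k hk ih =>
    intro ε hε
    have hε' : ∀ r, ε (r+1) = 0 ∨ ε (r+1) = 1 := fun r => hε (r+1)
    obtain ⟨IH1, IH2⟩ := ih (fun r => ε (r+1)) hε'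
    set C : ℤ := ∑ r ∈ Finset.range (k-1), ε (r+1) * (3*2^(2*r+1)) with hC
    have hsum : (∑ r ∈ Finset.range (k+1-1), ε r * (3*2^(2*r+1))) = ε 0 * 6 + 4 * C := by
      have e : k+1-1 = (k-1)+1 := by omega
      rw [e, Finset.sum_range_succ' (fun r => ε r * (3*2^(2*r+1))) (k-1)]
      rw [hC, Finset.mul_sum]
      have : ∀ r ∈ Finset.range (k-1),
          ε (r+1) * (3*2^(2*(r+1)+1)) = 4 * (ε (r+1) * (3*2^(2*r+1))) := by
        intro r _
        have h2 : (2:ℤ)^(2*(r+1)+1) = 4 * 2^(2*r+1) := by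
          rw [show 2*(r+1)+1 = (2*r+1)+2 from by ring, pow_add]; ring
        rw [h2]; ring
      rw [Finset.sum_congr rfl this]
      norm_num; ring
    have hpow : (2:ℤ)^(2*(k+1)) = 4 * 2^(2*k) := by
      rw [show 2*(k+1) = 2*k+2 from by ring, pow_add]; ring
    set E : ℤ := 2^(2*k) - 1 - C with hE
    constructor
    · intro n hn
      rw [hsum, hpow] at hn
      rcases hε 0 with h0 | h0
      · rw [h0] at hn
        have hn' : (n:ℤ) = 4*E + 3 := by rw [hE]; linarith
        have hnn : (0:ℤ) ≤ (n:ℤ) := Int.natCast_nonneg n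
        have hEnn : 0 ≤ E := by omega
        have hmE : ((E.toNat : ℕ) : ℤ) = E := Int.toNat_of_nonneg hEnn
        set m : ℕ := E.toNat with hm
        have hnm : n = 4*m + 3 := by omega
        obtain ⟨hSm, hpcm, hiSm, hpcm1⟩ := IH1 m (by rw [hmE, hE, hC])
        refine ⟨?_, ?_, ?_, ?_⟩
        · rw [hnm, S4p3, hSm, pow_succ]; ring
        · rw [hnm, pc43]; omega
        · have e : n - 1 = 4*m+2 := by omega
          rw [e, hnm]
          simp only [iSeq]
          rw [inv42, inv43, pow_add, pow_add, negonepow_even _ hpcm]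
          ring
        · have e : n - 1 = 4*m+2 := by omega
          rw [e, pc42]; omega
      · rw [h0] at hn
        have hn' : (n:ℤ) = 4*E - 3 := by rw [hE]; linarith
        have hnn : (0:ℤ) ≤ (n:ℤ) := Int.natCast_nonneg n
        have hEnn : 0 ≤ E := by omega
        have hmE : ((E.toNat : ℕ) : ℤ) = E := Int.toNat_of_nonneg hEnn
        set m1 : ℕ := E.toNat with hm1
        obtain ⟨hSm1, hpcm1even, hiS, hpcmodd⟩ := IH1 m1 (by rw [hmE, hE, hC])
        set m : ℕ := m1 - 1 with hm
        have hm1m : m1 = m + 1 := by omega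
        have hnm : n = 4*m + 1 := by omega
        have hSm : S m = 2^k - iSeq m1 := by
          have h2 : S (m+1) = S m + iSeq (m+1) := S_succ m
          rw [← hm1m] at h2
          rw [hSm1] at h2; linarith
        have htm : (-1:ℤ)^(pc m) = -1 := negonepow_odd _ hpcmodd
        refine ⟨?_, ?_, ?_, ?_⟩
        · rw [hnm, S4p1, htm, hSm, hiS, pow_succ]; ring
        · rw [hnm, pc41]; omega
        · have e : n - 1 = 4*m := by omega
          rw [e, hnm]
          simp only [iSeq]
          rw [inv40, inv41, pow_add, pow_add, htm]
          have h2 : (-1:ℤ)^(2 * pc m) = 1 := by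
            rw [pow_mul]; norm_num
          rw [h2]; ring
        · have e : n - 1 = 4*m := by omega
          rw [e, pc40]; exact hpcmodd
    · intro n hn
      rw [hsum, hpow] at hn
      rcases hε 0 with h0 | h0
      · rw [h0] at hn
        have hn' : (n:ℤ) = 4*E + 1 := by rw [hE]; linarith
        have hnn : (0:ℤ) ≤ (n:ℤ) := Int.natCast_nonneg n
        have hEnn : 0 ≤ E := by omega
        have hmE : ((E.toNat : ℕ) : ℤ) = E := Int.toNat_of_nonneg hEnn
        set m : ℕ := E.toNat with hm
        have hnm : n = 4*m + 1 := by omega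
        obtain ⟨hSm, hpcm, -, -⟩ := IH1 m (by rw [hmE, hE, hC])
        rw [hnm, S4p1, negonepow_even _ hpcm, hSm, pow_succ]; ring
      · rw [h0] at hn
        have hn' : (n:ℤ) = 4*(E-2) + 3 := by rw [hE]; linarith
        have hnn : (0:ℤ) ≤ (n:ℤ) := Int.natCast_nonneg n
        have hEnn : 0 ≤ E - 2 := by omega
        have hmE : (((E-2).toNat : ℕ) : ℤ) = E - 2 := Int.toNat_of_nonneg hEnn
        set m : ℕ := (E-2).toNat with hm
        have hnm : n = 4*m + 3 := by omega
        have hSm := IH2 m (by rw [hmE, hE, hC])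
        rw [hnm, S4p3, hSm, pow_succ]; ring

theorem summatory_eq_of_specialForm (k : ℕ) (hk : 1 ≤ k) (n : ℕ)
    (h : IsSpecialForm k (n : ℤ)) : S n = 2 ^ k := by
  obtain ⟨ε, hε, β, hβ, hn⟩ := h
  rcases hβ with rfl | rfl
  · rw [sub_zero] at hn
    exact ((key_lemma k hk ε hε).1 n hn).1
  · exact (key_lemma k hk ε hε).2 n hn
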